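/- Any path p of nonzero lattice vectors in the half-plane {(a,b): a > 0 or (a = 0 and b > 0)} can be transformed into a convex path (nondecreasing slopes) by finitely many local convexifications. -/

import Mathlib

/-- `det(a,b) = a₁b₂ - a₂b₁`. -/
def detZ (a b : ℤ × ℤ) : ℤ := a.1 * b.2 - a.2 * b.1

/-- Membership in the half-plane `{(a,b) : a > 0, or a = 0 and b > 0}`. -/
def inH (x : ℤ × ℤ) : Prop := 0 < x.1 ∨ (x.1 = 0 ∧ 0 < x.2)

/-- A path (list of lattice vectors) is convex if its slopes are nondecreasing, i.e.
`detZ a b ≥ 0` for adjacent entries. -/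
def ConvexPath (l : List (ℤ × ℤ)) : Prop := l.Chain' (fun a b => 0 ≤ detZ a b)

/-- One local convexification step: an adjacent nonconvex pair `(a,b)` (with
`μ(a) > μ(b)`, i.e. `detZ a b < 0`) is replaced by a convex path `q` of total weight
`a + b` lying in the triangle with sides `b`, `a` (every segment of `q` has slope
between `μ(b)` and `μ(a)` and lies in the half-plane). -/
def ConvStep (p p' : List (ℤ × ℤ)) : Prop :=
  ∃ (l₁ : List (ℤ × ℤ)) (a b : ℤ × ℤ) (q l₂ : List (ℤ × ℤ)),
    p = l₁ ++ a :: b :: l₂ ∧ detZ a b < 0 ∧ p' = l₁ ++ q ++ l₂ ∧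
    q.sum = a + b ∧ ConvexPath q ∧
    ∀ y ∈ q, inH y ∧ 0 ≤ detZ b y ∧ 0 ≤ detZ y a

lemma detZ_anti (a b : ℤ × ℤ) : detZ a b = -detZ b a := by
  simp [detZ]; ring

/-- nonconvex "area" of a path -/
def badness : List (ℤ × ℤ) → ℕ
  | [] => 0
  | a :: l => (l.map (fun b => (detZ b a).toNat)).sum + badness l

lemma badness_swap (l₁ : List (ℤ × ℤ)) (a b : ℤ × ℤ) (l₂ : List (ℤ × ℤ))
    (h : detZ a b < 0) :
    badness (l₁ ++ b :: a :: l₂) < badness (l₁ ++ a :: b :: l₂) := by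
  induction l₁ with
  | nil =>
      simp only [List.nil_append, badness, List.map_cons, List.sum_cons]
      have h1 : (detZ a b).toNat = 0 := Int.toNat_of_nonpos h.le
      have h2 : 0 < (detZ b a).toNat := by
        rw [detZ_anti] at h; omega
      omega
  | cons c l₁ ih =>
      simp only [List.cons_append, badness, List.append_eq]
      have hperm : (l₁ ++ b :: a :: l₂).Perm (l₁ ++ a :: b :: l₂) :=
        List.Perm.append_left l₁ (List.Perm.swap a b l₂)
      have hs := (hperm.map (fun x => (detZ x c).toNat)).sum_eq
      exact Nat.add_lt_add_of_le_of_lt (le_of_eq hs) ih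

lemma exists_bad (p : List (ℤ × ℤ)) (h : ¬ ConvexPath p) :
    ∃ l₁ a b l₂, p = l₁ ++ a :: b :: l₂ ∧ detZ a b < 0 := by
  induction p with
  | nil => exact absurd List.isChain_nil h
  | cons a l ih =>
      cases l with
      | nil => exact absurd (List.isChain_singleton a) h
      | cons b l =>
          rw [ConvexPath, List.Chain', List.isChain_cons_cons] at h
          push_neg at h
          by_cases hab : 0 ≤ detZ a b
          · obtain ⟨l₁, x, y, l₂, he, hd⟩ := ih (h hab)
            exact ⟨a :: l₁, x, y, l₂, by rw [he]; rfl, hd⟩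
          · exact ⟨[], a, b, l, rfl, by omega⟩

lemma convexify_aux (n : ℕ) : ∀ p : List (ℤ × ℤ), badness p ≤ n →
    (∀ x ∈ p, inH x) →
    ∃ p', Relation.ReflTransGen ConvStep p p' ∧ ConvexPath p' := by
  induction n with
  | zero =>
      intro p hb hH
      by_cases hc : ConvexPath p
      · exact ⟨p, Relation.ReflTransGen.refl, hc⟩
      · obtain ⟨l₁, a, b, l₂, he, hd⟩ := exists_bad p hc
        have := badness_swap l₁ a b l₂ hd
        rw [← he] at this
        omega
  | succ n ih =>
      intro p hb hH
      by_cases hc : ConvexPath p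
      · exact ⟨p, Relation.ReflTransGen.refl, hc⟩
      · obtain ⟨l₁, a, b, l₂, he, hd⟩ := exists_bad p hc
        set p' := l₁ ++ b :: a :: l₂ with hp'
        have hlt := badness_swap l₁ a b l₂ hd
        rw [← he] at hlt
        have hmem : ∀ x ∈ p', x ∈ p := by
          intro x hx
          rw [he]
          simp only [hp', List.mem_append, List.mem_cons] at hx ⊢
          tauto
        have hb' : badness p' ≤ n := by rw [hp']; omega
        obtain ⟨p'', hsteps, hcv⟩ := ih p' hb' (fun x hx => hH x (hmem x hx))
        refine ⟨p'', Relation.ReflTransGen.head ?_ hsteps, hcv⟩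
        have ha : inH a := hH a (by rw [he]; simp)
        have hba : 0 ≤ detZ b a := by rw [detZ_anti] at hd; omega
        refine ⟨l₁, a, b, [b, a], l₂, he, hd, by simp [hp'], by simp [add_comm], ?_, ?_⟩
        · exact List.isChain_pair.mpr hba
        · intro y hy
          have hbH : inH b := hH b (by rw [he]; simp)
          have hdaa : detZ a a = 0 := by simp [detZ]; ring
          have hdbb : detZ b b = 0 := by simp [detZ]; ring
          simp only [List.mem_cons, List.not_mem_nil, or_false] at hy
          rcases hy with hy | hy
          · subst hy; exact ⟨hbH, by omega, hba⟩
          · subst hy; exact ⟨ha, hba, by omega⟩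

/-- Any path of lattice vectors in the half-plane
`{(a,b) : a > 0 or (a = 0 and b > 0)}` can be transformed into a convex path by
finitely many local convexifications. -/
theorem convexify (p : List (ℤ × ℤ)) (hH : ∀ x ∈ p, inH x) :
    ∃ p', Relation.ReflTransGen ConvStep p p' ∧ ConvexPath p' :=
  convexify_aux (badness p) p le_rfl hH
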